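/- In the setting of the previous statement (Σ ⪰ 0, Σ_xx ≻ 0, K = Σ_ux Σ_xx^{-1}, σ_w² I ⪯ Σ_xx, ν = Tr(Σ), κ² = ν/σ_w²), the controller K satisfies ‖K‖₂ ≤ ‖K‖_F ≤ κ. -/

import Mathlib

open Matrix

noncomputable def opNorm {m n : Type*} [Fintype m] [Fintype n] [DecidableEq n]
    (M : Matrix m n ℝ) : ℝ :=
  ‖(Matrix.toEuclideanLin M).toContinuousLinearMap‖

noncomputable def frobNorm {m n : Type*} [Fintype m] [Fintype n]
    (M : Matrix m n ℝ) : ℝ :=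
  Real.sqrt (∑ i, ∑ j, (M i j) ^ 2)

lemma trace_nonneg_of_psd {n : Type*} [Fintype n] [DecidableEq n] {M : Matrix n n ℝ}
    (h : M.PosSemidef) : 0 ≤ M.trace := by
  rw [Matrix.trace]
  apply Finset.sum_nonneg
  intro i _
  have := h.diag_nonneg (i := i)
  simpa [dotProduct, Matrix.mulVec, Pi.single_apply, Finset.mul_sum] using this

/-- in the strong-stability setting (`Σ ⪰ 0`, `Σ_xx ≻ 0`,
`K = Σ_ux Σ_xx⁻¹`, `σ_w²I ⪯ Σ_xx`, `ν = Tr Σ`, `κ = √(ν/σ_w²)`), the controller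
satisfies `‖K‖₂ ≤ ‖K‖_F ≤ κ`. -/
theorem strong_stability_controller_norm (dx du : ℕ)
    (Sxx : Matrix (Fin dx) (Fin dx) ℝ) (Sxu : Matrix (Fin dx) (Fin du) ℝ)
    (Sux : Matrix (Fin du) (Fin dx) ℝ) (Suu : Matrix (Fin du) (Fin du) ℝ)
    (hpsd : (Matrix.fromBlocks Sxx Sxu Sux Suu).PosSemidef)
    (hxx : Sxx.PosDef)
    (σw : ℝ) (hσw : 0 < σw)
    (hlow : (Sxx - σw ^ 2 • (1 : Matrix (Fin dx) (Fin dx) ℝ)).PosSemidef)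
    (K : Matrix (Fin du) (Fin dx) ℝ) (hK : K = Sux * Sxx⁻¹)
    (ν : ℝ) (hν : ν = Matrix.trace (Matrix.fromBlocks Sxx Sxu Sux Suu)) :
    opNorm K ≤ frobNorm K ∧ frobNorm K ≤ Real.sqrt (ν / σw ^ 2) := by
  constructor
  · -- operator norm ≤ Frobenius norm
    apply ContinuousLinearMap.opNorm_le_bound _ (Real.sqrt_nonneg _)
    intro x
    rw [EuclideanSpace.norm_eq, EuclideanSpace.norm_eq]
    have hfun : ∀ i, ‖(Matrix.toEuclideanLin K).toContinuousLinearMap x i‖ ^ 2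
        = (∑ j, K i j * x j) ^ 2 := by
      intro i
      simp [Matrix.toEuclideanLin_apply, Matrix.mulVec, dotProduct, Real.norm_eq_abs,
        sq_abs]
    simp_rw [hfun]
    rw [← Real.sqrt_mul (by positivity)]
    apply Real.sqrt_le_sqrt
    rw [Finset.sum_mul]
    apply Finset.sum_le_sum
    intro i _
    calc (∑ j, K i j * x j) ^ 2
        ≤ (∑ j, K i j ^ 2) * ∑ j, (x j) ^ 2 :=
          Finset.sum_mul_sq_le_sq_mul_sq _ _ _
      _ = (∑ j, K i j ^ 2) * ∑ j, ‖x j‖ ^ 2 := by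
          simp [Real.norm_eq_abs, sq_abs]
  · -- Frobenius norm ≤ √(ν/σw²)
    haveI : Invertible Sxx := hxx.isUnit.invertible
    set t : ℝ := ∑ i, ∑ j, (K i j) ^ 2 with ht
    have ht0 : 0 ≤ t := by positivity
    -- block symmetry
    have hbl : Sux = Sxuᴴ := by
      have h1 := congrArg Matrix.toBlocks₂₁ hpsd.1.eq
      simpa [Matrix.fromBlocks_conjTranspose, Matrix.fromBlocks_transpose, Matrix.toBlocks_fromBlocks₂₁] using h1.symm
    -- Schur complement PSD
    have hschur : (Suu - Sxuᴴ * Sxx⁻¹ * Sxu).PosSemidef := by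
      rw [hbl] at hpsd
      exact (Matrix.PosDef.fromBlocks₁₁ Sxu Suu hxx).mp hpsd
    -- trace of K Kᴴ is t
    have htrKK : (K * Kᴴ).trace = t := by
      simp [Matrix.trace, Matrix.mul_apply, Matrix.diag, Matrix.conjTranspose_apply, ht,
        pow_two]
    -- K Sxx Kᴴ = Sxuᴴ Sxx⁻¹ Sxu
    have hdet : IsUnit Sxx.det := Matrix.isUnit_iff_isUnit_det _ |>.mp hxx.isUnit
    have hKSK : K * Sxx * Kᴴ = Sxuᴴ * Sxx⁻¹ * Sxu := by
      have hKH : (Sux * Sxx⁻¹)ᴴ = Sxx⁻¹ * Sxu := by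
        rw [Matrix.conjTranspose_mul, Matrix.conjTranspose_nonsing_inv, hxx.1.eq, hbl, Matrix.conjTranspose_conjTranspose]
      rw [hK, hKH, hbl, Matrix.mul_assoc (Sxuᴴ * Sxx⁻¹) Sxx, ← Matrix.mul_assoc Sxx,
        Matrix.mul_nonsing_inv _ hdet, Matrix.one_mul]
    -- σw² t ≤ trace (K Sxx Kᴴ)
    have h1 : σw ^ 2 * t ≤ (K * Sxx * Kᴴ).trace := by
      have hp : (K * (Sxx - σw ^ 2 • (1 : Matrix (Fin dx) (Fin dx) ℝ)) * Kᴴ).PosSemidef :=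
        hlow.mul_mul_conjTranspose_same K
      have := trace_nonneg_of_psd hp
      have hexp : K * (Sxx - σw ^ 2 • (1 : Matrix (Fin dx) (Fin dx) ℝ)) * Kᴴ
          = K * Sxx * Kᴴ - σw ^ 2 • (K * Kᴴ) := by
        rw [Matrix.mul_sub, Matrix.sub_mul]
        congr 1
        simp [Matrix.mul_smul, Matrix.smul_mul]
      rw [hexp, Matrix.trace_sub, Matrix.trace_smul, htrKK, sub_nonneg, smul_eq_mul] at this
      exact this
    -- trace (K Sxx Kᴴ) ≤ trace Suu
    have h2 : (K * Sxx * Kᴴ).trace ≤ Suu.trace := by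
      have := trace_nonneg_of_psd hschur
      rw [Matrix.trace_sub, sub_nonneg] at this
      rw [hKSK]; exact this
    -- trace Suu ≤ ν
    have h3 : Suu.trace ≤ ν := by
      have hνeq : ν = Sxx.trace + Suu.trace := by
        rw [hν]
        simp [Matrix.trace, Fintype.sum_sum_type, Matrix.fromBlocks, Matrix.diag]
      rw [hνeq]
      linarith [trace_nonneg_of_psd hxx.posSemidef]
    have hfinal : t ≤ ν / σw ^ 2 := by
      rw [le_div_iff₀ (by positivity)]
      calc t * σw ^ 2 = σw ^ 2 * t := by ring
        _ ≤ (K * Sxx * Kᴴ).trace := h1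
        _ ≤ Suu.trace := h2
        _ ≤ ν := h3
    exact Real.sqrt_le_sqrt hfinal
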